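/- Let G be a connected finite simple graph of diameter two and let e be an edge of G such that the minimum length of a cycle of G containing e is exactly 4 (i.e., w_G(e) = 4). Then the graph G − e obtained by deleting e is connected and has diameter exactly 3. -/

import Mathlib

/-- `cycleWeight G e` is the minimum length of a cycle of `G` containing the edge `e`
(`⊤` if no cycle of `G` contains `e`). This is the weight function `w_G(e)`. -/
noncomputable def cycleWeight {V : Type*} (G : SimpleGraph V) (e : Sym2 V) : ℕ∞ :=
  ⨅ (u : V) (p : G.Walk u u) (_ : p.IsCycle ∧ e ∈ p.edges), (p.length : ℕ∞)

open SimpleGraph Walk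

private lemma exists_mid_of_edist_le_two {V : Type*} {G : SimpleGraph V} {a b : V}
    (h : G.edist a b ≤ 2) (hne : a ≠ b) (hadj : ¬ G.Adj a b) :
    ∃ c, G.Adj a c ∧ G.Adj c b := by
  have htop : G.edist a b ≠ ⊤ := by
    intro ht; rw [ht] at h; exact absurd h (by simp)
  obtain ⟨p, hp⟩ := SimpleGraph.exists_walk_of_edist_ne_top htop
  have hlen : p.length ≤ 2 := by exact_mod_cast (le_of_eq hp).trans h
  cases p with
  | nil => exact absurd rfl hne
  | cons h1 q =>
    cases q with
    | nil => exact absurd h1 hadj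
    | cons h2 r =>
      cases r with
      | nil => exact ⟨_, h1, h2⟩
      | cons h3 s => simp [Walk.length_cons] at hlen

private lemma edist_delete_le_three {V : Type*} {G : SimpleGraph V} {u v x : V}
    (huv : G.Adj u v) (hux : G.Adj u x) (hxv : x ≠ v)
    (h2 : ∀ a b : V, a ≠ b → G.edist a b ≤ 2)
    {b : V} (hbu : b ≠ u) (hbv : b ≠ v) (hnadj : ¬ G.Adj u b) :
    (G.deleteEdges {s(u,v)}).edist u b ≤ 3 := by
  have hxu : x ≠ u := hux.ne'
  have hadj' : ∀ {a c : V}, G.Adj a c → s(a,c) ≠ s(u,v) →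
      (G.deleteEdges {s(u,v)}).Adj a c := by
    intro a c h hne
    simp [SimpleGraph.deleteEdges_adj, h, hne]
  have hne_ux : s(u, x) ≠ s(u, v) := by simp [Sym2.eq_iff, hxv, huv.ne]
  by_cases hxb : G.Adj x b
  · have hne_xb : s(x, b) ≠ s(u, v) := by simp [Sym2.eq_iff, hxu, hxv]
    have := SimpleGraph.edist_le
      (Walk.cons (hadj' hux hne_ux) (Walk.cons (hadj' hxb hne_xb) Walk.nil))
    simp only [Walk.length_cons, Walk.length_nil] at this
    exact this.trans (by norm_num)
  · have hxb' : x ≠ b := fun h => hnadj (h ▸ hux)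
    obtain ⟨z, hxz, hzb⟩ := exists_mid_of_edist_le_two (h2 x b hxb') hxb' hxb
    have hne_xz : s(x, z) ≠ s(u, v) := by simp [Sym2.eq_iff, hxu, hxv]
    have hne_zb : s(z, b) ≠ s(u, v) := by simp [Sym2.eq_iff, hbu, hbv]
    have := SimpleGraph.edist_le
      (Walk.cons (hadj' hux hne_ux) (Walk.cons (hadj' hxz hne_xz)
        (Walk.cons (hadj' hzb hne_zb) Walk.nil)))
    simpa using this

private lemma four_cycle_extract {V : Type*} {G : SimpleGraph V} {u v : V} (he : G.Adj u v)
    (hw : cycleWeight G s(u,v) = 4)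
    (hmin : ∀ (w : V) (p : G.Walk w w), p.IsCycle → s(u,v) ∈ p.edges →
      (4:ℕ∞) ≤ p.length) :
    ∃ x y, G.Adj u x ∧ G.Adj x y ∧ G.Adj y v ∧ x ≠ v ∧ y ≠ u ∧ y ≠ v := by
  classical
  have huv : u ≠ v := he.ne
  have hlt : cycleWeight G s(u,v) < 5 := by rw [hw]; norm_num
  rw [cycleWeight] at hlt
  simp only [iInf_lt_iff] at hlt
  obtain ⟨w, p, ⟨hcyc, hmem⟩, hlt5⟩ := hlt
  have hu_supp : u ∈ p.support := p.fst_mem_support_of_mem_edges hmem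
  have hge := hmin w p hcyc hmem
  have hlen : p.length = 4 := by
    have h1 : p.length < 5 := by exact_mod_cast hlt5
    have h2 : 4 ≤ p.length := by exact_mod_cast hge
    omega
  obtain ⟨q, hqc, hqe, hqlen⟩ : ∃ q : G.Walk u u, q.IsCycle ∧ s(u,v) ∈ q.edges ∧
      q.length = 4 := by
    refine ⟨p.rotate u hu_supp, hcyc.rotate hu_supp,
      ((p.rotate_edges u hu_supp).mem_iff).mpr hmem, ?_⟩
    have hl := (p.rotate_edges u hu_supp).perm.length_eq
    rw [Walk.length_edges, Walk.length_edges] at hl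
    omega
  clear hmem hcyc hge hlen hlt5 hu_supp
  cases q with
  | nil => simp at hqlen
  | cons h1 q1 =>
  rename_i a
  cases q1 with
  | nil => simp at hqlen
  | cons h2 q2 =>
  rename_i b
  cases q2 with
  | nil => simp at hqlen
  | cons h3 q3 =>
  rename_i c
  cases q3 with
  | cons h4 q4 =>
    cases q4 with
    | nil =>
      have hnd := hqc.2
      simp only [Walk.support_cons, Walk.support_nil, List.tail_cons, List.nodup_cons,
        List.mem_cons, List.mem_singleton, List.not_mem_nil] at hnd
      push_neg at hnd
      simp only [not_false_iff, and_true] at hnd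
      obtain ⟨⟨hab, hac, hau⟩, ⟨hbc, hbu⟩, hcu⟩ := hnd
      simp only [Walk.edges_cons, Walk.edges_nil, List.mem_cons, List.not_mem_nil,
        or_false, Sym2.eq_iff] at hqe
      rcases hqe with (h | h) | (h | h) | (h | h) | (h | h)
      · obtain ⟨-, rfl⟩ := h
        exact ⟨c, b, h4.symm, h3.symm, h2.symm, hac.symm, hbu, hab.symm⟩
      · exact absurd h.2 huv.symm
      · exact absurd h.1.symm hau
      · exact absurd h.1.symm hbu
      · exact absurd h.1.symm hbu
      · exact absurd h.1.symm hcu.1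
      · exact absurd h.2 huv.symm
      · obtain ⟨-, rfl⟩ := h
        exact ⟨a, b, h1, h2, h3, hac, hbu, hbc⟩
    | cons h5 q5 => simp [Walk.length_cons] at hqlen
  | nil => simp at hqlen

/-- Let `G` be a connected finite simple graph of diameter two and let
`e` be an edge of `G` with `w_G(e) = 4`. Then `G − e` is connected and has diameter exactly 3. -/
theorem deleteEdge_of_cycleWeight_four {V : Type*} [Fintype V] (G : SimpleGraph V)
    (hG : G.Connected) (hdiam : G.diam = 2) (e : Sym2 V) (he : e ∈ G.edgeSet)
    (hw : cycleWeight G e = 4) :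
    (G.deleteEdges {e}).Connected ∧
      (G.deleteEdges {e}).diam = 3 := by
  revert he hw
  induction e using Sym2.ind with
  | _ u v =>
  intro he hw
  rw [SimpleGraph.mem_edgeSet] at he
  have huv : u ≠ v := he.ne
  -- every cycle through e has length ≥ 4
  have hmin : ∀ (w : V) (p : G.Walk w w), p.IsCycle → s(u,v) ∈ p.edges →
      (4:ℕ∞) ≤ p.length := by
    intro w p hc hm
    calc (4:ℕ∞) = cycleWeight G s(u,v) := hw.symm
    _ ≤ p.length := iInf_le_of_le w <| iInf_le_of_le p <| iInf_le _ ⟨hc, hm⟩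
  -- no triangle through e
  have htri : ∀ z, G.Adj u z → G.Adj z v → False := by
    intro z h1 h2
    have hcyc : (Walk.cons h1 (Walk.cons h2 (Walk.cons he.symm Walk.nil))).IsCycle := by
      simp [Walk.isCycle_def, Walk.isTrail_def, Sym2.eq_iff, h1.ne, h2.ne, huv,
        h1.ne', h2.ne', huv.symm]
    have hmem : s(u,v) ∈ (Walk.cons h1 (Walk.cons h2 (Walk.cons he.symm Walk.nil))).edges := by
      simp [Sym2.eq_swap]
    have h4 := hmin u _ hcyc hmem
    simp only [Walk.length_cons, Walk.length_nil] at h4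
    norm_num at h4
  -- the 4-cycle gives a path u-x-y-v avoiding e
  obtain ⟨x, y, hux, hxy, hyv, hxv, hyu, hyvne⟩ := four_cycle_extract he hw hmin
  -- ediam of G is 2, so all distinct vertices are at edistance ≤ 2
  have hed2 : ∀ a b : V, a ≠ b → G.edist a b ≤ 2 := by
    intro a b _
    have hne0 : G.diam ≠ 0 := by rw [hdiam]; norm_num
    have htop := SimpleGraph.ediam_ne_top_of_diam_ne_zero hne0
    have hed : G.ediam = 2 := by
      have h2 := hdiam
      unfold SimpleGraph.diam at h2
      exact (ENat.toNat_eq_iff (by norm_num)).mp h2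
    exact hed ▸ SimpleGraph.edist_le_ediam
  set G' := G.deleteEdges {s(u,v)} with hG'
  have hadj' : ∀ {a c : V}, G.Adj a c → s(a,c) ≠ s(u,v) → G'.Adj a c := by
    intro a c h hne
    simp [hG', SimpleGraph.deleteEdges_adj, h, hne]
  -- the special pair u v is at edistance ≤ 3 in G'
  have hP3 : G'.edist u v ≤ 3 := by
    have hne_ux : s(u, x) ≠ s(u, v) := by simp [Sym2.eq_iff, hxv, huv]
    have hne_xy : s(x, y) ≠ s(u, v) := by simp [Sym2.eq_iff, hux.ne', hxv]
    have hne_yv : s(y, v) ≠ s(u, v) := by simp [Sym2.eq_iff, hyu, hyvne]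
    have := SimpleGraph.edist_le
      (Walk.cons (hadj' hux hne_ux) (Walk.cons (hadj' hxy hne_xy)
        (Walk.cons (hadj' hyv hne_yv) Walk.nil)))
    simpa using this
  -- upper bound: every pair is at edistance ≤ 3 in G'
  have hub : ∀ a b : V, G'.edist a b ≤ 3 := by
    intro a b
    by_cases hab : a = b
    · simp [hab]
    by_cases hGadj : G.Adj a b
    · by_cases hE : s(a,b) = s(u,v)
      · rw [Sym2.eq_iff] at hE
        rcases hE with ⟨rfl, rfl⟩ | ⟨rfl, rfl⟩
        · exact hP3
        · rw [SimpleGraph.edist_comm]; exact hP3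
      · have := SimpleGraph.edist_le (Walk.cons (hadj' hGadj hE) Walk.nil)
        simp only [Walk.length_cons, Walk.length_nil] at this
        exact this.trans (by norm_num)
    · obtain ⟨c, h1, h2⟩ := exists_mid_of_edist_le_two (hed2 a b hab) hab hGadj
      by_cases hE1 : s(a,c) = s(u,v)
      · rw [Sym2.eq_iff] at hE1
        rcases hE1 with ⟨rfl, rfl⟩ | ⟨rfl, rfl⟩
        · exact edist_delete_le_three he hux hxv hed2 (Ne.symm hab) h2.ne' hGadj
        · have hres := edist_delete_le_three he.symm hyv.symm hyu
            hed2 (Ne.symm hab) h2.ne' hGadj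
          rwa [Sym2.eq_swap] at hres
      · by_cases hE2 : s(c,b) = s(u,v)
        · rw [Sym2.eq_iff] at hE2
          rcases hE2 with ⟨rfl, rfl⟩ | ⟨rfl, rfl⟩
          · rw [SimpleGraph.edist_comm]
            have hres := edist_delete_le_three he.symm hyv.symm hyu
              hed2 hab h1.ne (fun h => hGadj h.symm)
            rwa [Sym2.eq_swap] at hres
          · rw [SimpleGraph.edist_comm]
            exact edist_delete_le_three he hux hxv hed2 hab h1.ne
              (fun h => hGadj h.symm)
        · have := SimpleGraph.edist_le
            (Walk.cons (hadj' h1 hE1) (Walk.cons (hadj' h2 hE2) Walk.nil))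
          simp only [Walk.length_cons, Walk.length_nil] at this
          exact this.trans (by norm_num)
  -- lower bound: u and v are at edistance ≥ 3 in G'
  have hnadj' : ¬ G'.Adj u v := by simp [hG', SimpleGraph.deleteEdges_adj]
  have hlb : 3 ≤ G'.edist u v := by
    by_contra hcon
    push_neg at hcon
    have htop : G'.edist u v ≠ ⊤ := by
      intro h; rw [h] at hcon; exact absurd hcon (by simp)
    have h2' : G'.edist u v ≤ 2 := by
      obtain ⟨p, hp⟩ := SimpleGraph.exists_walk_of_edist_ne_top htop
      have hl3 : p.length < 3 := by exact_mod_cast hp ▸ hcon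
      calc G'.edist u v ≤ p.length := SimpleGraph.edist_le p
      _ ≤ 2 := by exact_mod_cast Nat.lt_succ_iff.mp hl3
    obtain ⟨z, hz1, hz2⟩ := exists_mid_of_edist_le_two h2' huv hnadj'
    exact htri z ((SimpleGraph.deleteEdges_adj.mp hz1).1)
      ((SimpleGraph.deleteEdges_adj.mp hz2).1)
  have hediam' : G'.ediam = 3 :=
    le_antisymm (SimpleGraph.ediam_le_of_edist_le fun a b => hub a b)
      (hlb.trans SimpleGraph.edist_le_ediam)
  constructor
  · have hne : Nonempty V := ⟨u⟩
    rw [SimpleGraph.connected_iff]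
    refine ⟨fun a b => ?_, hne⟩
    refine SimpleGraph.reachable_of_edist_ne_top ?_
    intro h
    have := hub a b
    rw [h] at this
    exact absurd this (by simp)
  · unfold SimpleGraph.diam
    rw [hediam']
    rfl
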